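/- Fix γ > 0 and p ∈ (0,1) with p ≠ 1/2, and let T_p ~ Beta(p/γ, (1-p)/γ). The probability of making a Bayesian choice, P((T_p − 1/2)(p − 1/2) > 0), is strictly increasing in |p − 1/2|: if |p_x − 1/2| > |p_y − 1/2| then P((T_{p_x} − 1/2)(p_x − 1/2) > 0) > P((T_{p_y} − 1/2)(p_y − 1/2) > 0). -/

import Mathlib

/-- Density of the `Beta(a,b)` distribution on `(0,1)`. -/
noncomputable def betaPdf (a b t : ℝ) : ℝ :=
  if t ∈ Set.Ioo (0:ℝ) 1 then
    t ^ (a - 1) * (1 - t) ^ (b - 1) /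
      ∫ s in (0:ℝ)..1, s ^ (a - 1) * (1 - s) ^ (b - 1)
  else 0

/-- The `Beta(a,b)` probability measure on `ℝ`. -/
noncomputable def betaMeasure (a b : ℝ) : MeasureTheory.Measure ℝ :=
  MeasureTheory.volume.withDensity fun t => ENNReal.ofReal (betaPdf a b t)

open MeasureTheory Set intervalIntegral

namespace Beta13

/-- unnormalized density -/
noncomputable def f (a b t : ℝ) : ℝ := t ^ (a - 1) * (1 - t) ^ (b - 1)

lemma f_pos {a b t : ℝ} (ht : t ∈ Ioo (0:ℝ) 1) : 0 < f a b t :=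
  mul_pos (Real.rpow_pos_of_pos ht.1 _) (Real.rpow_pos_of_pos (by linarith [ht.2]) _)

lemma f_meas (a b : ℝ) : Measurable (f a b) := by
  unfold f
  fun_prop

lemma f_symm (a b t : ℝ) : f a b (1 - t) = f b a t := by
  simp [f, sub_sub_cancel]; ring

/-- integrable on [0, 1/2] -/
lemma int_left {a b : ℝ} (ha : 0 < a) : IntervalIntegrable (f a b) volume 0 (1/2) := by
  set C : ℝ := max 1 ((1/2 : ℝ) ^ (b - 1)) with hC
  have hbase : IntervalIntegrable (fun t : ℝ => C * t ^ (a - 1)) volume 0 (1/2) :=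
    (intervalIntegrable_rpow' (by linarith)).const_mul C
  rw [intervalIntegrable_iff_integrableOn_Ioc_of_le (by norm_num)] at hbase ⊢
  refine Integrable.mono hbase ((f_meas a b).aestronglyMeasurable) ?_
  filter_upwards [ae_restrict_mem measurableSet_Ioc] with t ht
  have ht0 : 0 < t := ht.1
  have ht1 : (1:ℝ)/2 ≤ 1 - t := by have := ht.2; linarith
  have h1t : (0:ℝ) < 1 - t := by linarith
  have hb : (1 - t) ^ (b - 1) ≤ C := by
    rcases le_or_gt 0 (b - 1) with hb1 | hb1
    · refine le_max_of_le_left ?_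
      exact Real.rpow_le_one (by linarith) (by linarith [ht.2]) hb1
    · refine le_max_of_le_right ?_
      exact Real.rpow_le_rpow_of_nonpos (by norm_num) ht1 hb1.le
  have hfnn : 0 < f a b t := f_pos ⟨ht0, by linarith [ht.2, ht.1]⟩
  rw [Real.norm_of_nonneg hfnn.le, Real.norm_of_nonneg
      (by positivity : (0:ℝ) ≤ C * t ^ (a - 1))]
  calc f a b t = (1 - t) ^ (b - 1) * t ^ (a - 1) := by rw [f]; ring
    _ ≤ C * t ^ (a - 1) :=
        mul_le_mul_of_nonneg_right hb (Real.rpow_nonneg ht0.le _)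

lemma int_right {a b : ℝ} (hb : 0 < b) : IntervalIntegrable (f a b) volume (1/2) 1 := by
  have h := ((int_left (a := b) (b := a) hb).comp_sub_left 1).symm
  norm_num at h
  have : (fun x => f b a (1 - x)) = f a b := by
    funext t; rw [f_symm]
  rwa [this] at h

lemma int_all {a b : ℝ} (ha : 0 < a) (hb : 0 < b) : IntervalIntegrable (f a b) volume 0 1 :=
  (int_left ha).trans (int_right hb)

/-- left mass -/
noncomputable def A (a b : ℝ) : ℝ := ∫ t in (0:ℝ)..(1/2), f a b t
/-- right mass -/
noncomputable def C (a b : ℝ) : ℝ := ∫ t in (1/2:ℝ)..1, f a b t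

lemma A_pos {a b : ℝ} (ha : 0 < a) : 0 < A a b := by
  refine intervalIntegral_pos_of_pos_on (int_left ha) (fun t ht => ?_) (by norm_num)
  exact f_pos ⟨ht.1, by linarith [ht.2]⟩

lemma C_pos {a b : ℝ} (hb : 0 < b) : 0 < C a b := by
  refine intervalIntegral_pos_of_pos_on (int_right hb) (fun t ht => ?_) (by norm_num)
  exact f_pos ⟨by linarith [ht.1], ht.2⟩

lemma A_symm (a b : ℝ) : A a b = C b a := by
  rw [A, C]
  have e : ∀ t : ℝ, f a b t = f b a (1 - t) := fun t => (f_symm b a t).symm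
  simp_rw [e]
  rw [intervalIntegral.integral_comp_sub_left (f b a) 1]
  norm_num

/-- pointwise comparison on (0, 1/2) -/
lemma f_lt_left {a b δ t : ℝ} (hδ : 0 < δ) (ht : t ∈ Ioo (0:ℝ) (1/2)) :
    f (a + δ) (b - δ) t < f a b t := by
  have ht0 : (0:ℝ) < t := ht.1
  have h1t : (0:ℝ) < 1 - t := by have := ht.2; linarith
  have htlt : t < 1 - t := by have := ht.2; linarith
  have key : t ^ δ < (1 - t) ^ δ := Real.rpow_lt_rpow ht0.le htlt hδ
  have e1 : t ^ (a + δ - 1) = t ^ (a - 1) * t ^ δ := by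
    rw [← Real.rpow_add ht0]; ring_nf
  have e2 : (1 - t) ^ (b - δ - 1) = (1 - t) ^ (b - 1) / (1 - t) ^ δ := by
    rw [← Real.rpow_sub h1t]; ring_nf
  have hfp : 0 < f a b t := f_pos ⟨ht0, by linarith⟩
  have hd : 0 < (1 - t) ^ δ := Real.rpow_pos_of_pos h1t δ
  have : f (a + δ) (b - δ) t = f a b t * (t ^ δ / (1 - t) ^ δ) := by
    rw [f, f, e1, e2]; ring
  rw [this]
  have hr : t ^ δ / (1 - t) ^ δ < 1 := (div_lt_one hd).mpr key
  nlinarith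

/-- pointwise comparison on (1/2, 1) -/
lemma f_gt_right {a b δ t : ℝ} (hδ : 0 < δ) (ht : t ∈ Ioo (1/2:ℝ) 1) :
    f a b t < f (a + δ) (b - δ) t := by
  have ht0 : (0:ℝ) < t := by linarith [ht.1]
  have h1t : (0:ℝ) < 1 - t := by linarith [ht.2]
  have htlt : 1 - t < t := by linarith [ht.1]
  have key : (1 - t) ^ δ < t ^ δ := Real.rpow_lt_rpow h1t.le htlt hδ
  have e1 : t ^ (a + δ - 1) = t ^ (a - 1) * t ^ δ := by
    rw [← Real.rpow_add ht0]; ring_nf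
  have e2 : (1 - t) ^ (b - δ - 1) = (1 - t) ^ (b - 1) / (1 - t) ^ δ := by
    rw [← Real.rpow_sub h1t]; ring_nf
  have hfp : 0 < f a b t := f_pos ⟨ht0, by linarith⟩
  have hd : 0 < (1 - t) ^ δ := Real.rpow_pos_of_pos h1t δ
  have heq : f (a + δ) (b - δ) t = f a b t * (t ^ δ / (1 - t) ^ δ) := by
    rw [f, f, e1, e2]; ring
  rw [heq]
  have hr : 1 < t ^ δ / (1 - t) ^ δ := (one_lt_div hd).mpr key
  nlinarith

/-- strict integral comparison on an interval from pointwise strict comparison -/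
lemma integral_lt {g₁ g₂ : ℝ → ℝ} {u v : ℝ} (huv : u < v)
    (h₁ : IntervalIntegrable g₁ volume u v) (h₂ : IntervalIntegrable g₂ volume u v)
    (hlt : ∀ t ∈ Ioo u v, g₁ t < g₂ t) :
    (∫ t in u..v, g₁ t) < ∫ t in u..v, g₂ t := by
  have h : 0 < ∫ t in u..v, (g₂ t - g₁ t) :=
    intervalIntegral_pos_of_pos_on (h₂.sub h₁) (fun t ht => sub_pos.mpr (hlt t ht)) huv
  rw [intervalIntegral.integral_sub h₂ h₁] at h
  linarith

lemma A_lt {a b δ : ℝ} (ha : 0 < a) (hδ : 0 < δ) (hb : δ < b) :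
    A (a + δ) (b - δ) < A a b :=
  integral_lt (by norm_num) (int_left (by linarith)) (int_left ha)
    (fun t ht => f_lt_left hδ ht)

lemma C_lt {a b δ : ℝ} (ha : 0 < a) (hδ : 0 < δ) (hb : δ < b) :
    C a b < C (a + δ) (b - δ) :=
  integral_lt (by norm_num) (int_right (by linarith)) (int_right (by linarith))
    (fun t ht => f_gt_right hδ ht)

/-- the Bayesian-choice probability for a parameter `q` (the "upper" probability). -/
noncomputable def G (a b : ℝ) : ℝ := C a b / (A a b + C a b)

lemma G_pos {a b : ℝ} (ha : 0 < a) (hb : 0 < b) : 0 < G a b :=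
  div_pos (C_pos hb) (by linarith [A_pos (b := b) ha, C_pos (a := a) hb])

lemma G_lt {a b δ : ℝ} (ha : 0 < a) (hδ : 0 < δ) (hb : δ < b) :
    G a b < G (a + δ) (b - δ) := by
  have hA1 := A_pos (b := b) ha
  have hC1 := C_pos (a := a) (show (0:ℝ) < b by linarith)
  have hA2 := A_pos (b := b - δ) (show (0:ℝ) < a + δ by linarith)
  have hC2 := C_pos (a := a + δ) (show (0:ℝ) < b - δ by linarith)
  have h1 := A_lt ha hδ hb
  have h2 := C_lt ha hδ hb
  rw [G, G, div_lt_div_iff₀ (by linarith) (by linarith)]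
  nlinarith

/-- compute the measure of the upper half -/
lemma measure_upper {a b : ℝ} (ha : 0 < a) (hb : 0 < b) :
    ((betaMeasure a b) (Ioi (1/2 : ℝ))).toReal = G a b := by
  have hB : A a b + C a b = ∫ s in (0:ℝ)..1, f a b s :=
    (intervalIntegral.integral_add_adjacent_intervals (int_left ha) (int_right hb))
  have hBpos : 0 < A a b + C a b := by linarith [A_pos (b := b) ha, C_pos (a := a) hb]
  set B : ℝ := ∫ s in (0:ℝ)..1, f a b s with hBdef
  have hpdf : (fun t => ENNReal.ofReal (betaPdf a b t)) =
      (Ioo (0:ℝ) 1).indicator (fun t => ENNReal.ofReal (f a b t / B)) := by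
    funext t
    rw [betaPdf, Set.indicator_apply]
    split_ifs with h
    · rfl
    · simp
  rw [betaMeasure, withDensity_apply _ measurableSet_Ioi, hpdf,
    setLIntegral_indicator measurableSet_Ioo]
  have hset : Ioo (0:ℝ) 1 ∩ Ioi (1/2) = Ioo (1/2 : ℝ) 1 := by
    ext t; simp only [mem_inter_iff, mem_Ioo, mem_Ioi]
    constructor
    · rintro ⟨⟨_, h1⟩, h2⟩; exact ⟨h2, h1⟩
    · rintro ⟨h1, h2⟩; exact ⟨⟨by linarith, h2⟩, h1⟩
  rw [hset]
  have hint : IntegrableOn (fun t => f a b t / B) (Ioo (1/2:ℝ) 1) := by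
    have := (int_right (a := a) hb).div_const B
    rw [intervalIntegrable_iff_integrableOn_Ioc_of_le (by norm_num)] at this
    exact this.mono_set Ioo_subset_Ioc_self
  have hnn : 0 ≤ᵐ[volume.restrict (Ioo (1/2:ℝ) 1)] fun t => f a b t / B := by
    filter_upwards [ae_restrict_mem measurableSet_Ioo] with t ht
    exact div_nonneg (f_pos ⟨by linarith [ht.1], ht.2⟩).le (hB ▸ hBpos.le)
  rw [← MeasureTheory.ofReal_integral_eq_lintegral_ofReal hint hnn,
    ENNReal.toReal_ofReal]
  · rw [MeasureTheory.integral_div, ← MeasureTheory.integral_Ioc_eq_integral_Ioo,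
      ← intervalIntegral.integral_of_le (by norm_num : (1/2:ℝ) ≤ 1)]
    rw [G, ← hB, C]
  · rw [MeasureTheory.integral_div]
    apply div_nonneg _ (hB ▸ hBpos.le)
    apply MeasureTheory.setIntegral_nonneg measurableSet_Ioo
    exact fun t ht => (f_pos ⟨by linarith [ht.1], ht.2⟩).le

/-- compute the measure of the lower half -/
lemma measure_lower {a b : ℝ} (ha : 0 < a) (hb : 0 < b) :
    ((betaMeasure a b) (Iio (1/2 : ℝ))).toReal = G b a := by
  have hB : A a b + C a b = ∫ s in (0:ℝ)..1, f a b s :=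
    (intervalIntegral.integral_add_adjacent_intervals (int_left ha) (int_right hb))
  have hBpos : 0 < A a b + C a b := by linarith [A_pos (b := b) ha, C_pos (a := a) hb]
  set B : ℝ := ∫ s in (0:ℝ)..1, f a b s with hBdef
  have hpdf : (fun t => ENNReal.ofReal (betaPdf a b t)) =
      (Ioo (0:ℝ) 1).indicator (fun t => ENNReal.ofReal (f a b t / B)) := by
    funext t
    rw [betaPdf, Set.indicator_apply]
    split_ifs with h
    · rfl
    · simp
  rw [betaMeasure, withDensity_apply _ measurableSet_Iio, hpdf,
    setLIntegral_indicator measurableSet_Ioo]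
  have hset : Ioo (0:ℝ) 1 ∩ Iio (1/2) = Ioo (0:ℝ) (1/2) := by
    ext t; simp only [mem_inter_iff, mem_Ioo, mem_Iio]
    constructor
    · rintro ⟨⟨h0, _⟩, h2⟩; exact ⟨h0, h2⟩
    · rintro ⟨h1, h2⟩; exact ⟨⟨h1, by linarith⟩, h2⟩
  rw [hset]
  have hint : IntegrableOn (fun t => f a b t / B) (Ioo (0:ℝ) (1/2)) := by
    have := (int_left (b := b) ha).div_const B
    rw [intervalIntegrable_iff_integrableOn_Ioc_of_le (by norm_num)] at this
    exact this.mono_set Ioo_subset_Ioc_self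
  have hnn : 0 ≤ᵐ[volume.restrict (Ioo (0:ℝ) (1/2))] fun t => f a b t / B := by
    filter_upwards [ae_restrict_mem measurableSet_Ioo] with t ht
    exact div_nonneg (f_pos ⟨ht.1, by linarith [ht.2]⟩).le (hB ▸ hBpos.le)
  rw [← MeasureTheory.ofReal_integral_eq_lintegral_ofReal hint hnn,
    ENNReal.toReal_ofReal]
  · rw [MeasureTheory.integral_div, ← MeasureTheory.integral_Ioc_eq_integral_Ioo,
      ← intervalIntegral.integral_of_le (by norm_num : (0:ℝ) ≤ 1/2)]
    rw [G, A_symm b a, ← A_symm a b, ← hB, A]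
    ring
  · rw [MeasureTheory.integral_div]
    apply div_nonneg _ (hB ▸ hBpos.le)
    apply MeasureTheory.setIntegral_nonneg measurableSet_Ioo
    exact fun t ht => (f_pos ⟨ht.1, by linarith [ht.2]⟩).le

/-- The Bayesian choice probability, as a function of `p`. -/
lemma bayes_prob {γ p : ℝ} (hγ : 0 < γ) (hp : p ∈ Ioo (0:ℝ) 1) (hne : p ≠ 1/2) :
    ((betaMeasure (p/γ) ((1-p)/γ)) {t : ℝ | (t - 1/2) * (p - 1/2) > 0}).toReal
      = G (max p (1-p) / γ) ((1 - max p (1-p)) / γ) := by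
  have ha : 0 < p / γ := div_pos hp.1 hγ
  have hb : 0 < (1 - p) / γ := div_pos (by linarith [hp.2]) hγ
  rcases lt_or_gt_of_ne hne with hlt | hgt
  · have hset : {t : ℝ | (t - 1/2) * (p - 1/2) > 0} = Iio (1/2 : ℝ) := by
      ext t; simp only [mem_setOf_eq, mem_Iio]
      constructor
      · intro h; by_contra hc; push_neg at hc; nlinarith
      · intro h; nlinarith
    have hmax : max p (1-p) = 1 - p := max_eq_right (by linarith)
    rw [hset, measure_lower ha hb, hmax]
    congr 2
    linarith
  · have hset : {t : ℝ | (t - 1/2) * (p - 1/2) > 0} = Ioi (1/2 : ℝ) := by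
      ext t; simp only [mem_setOf_eq, mem_Ioi]
      constructor
      · intro h; by_contra hc; push_neg at hc; nlinarith
      · intro h; nlinarith
    have hmax : max p (1-p) = p := max_eq_left (by linarith)
    rw [hset, measure_upper ha hb, hmax]

end Beta13

/-- The probability of a Bayesian choice, `P((T_p - 1/2)(p - 1/2) > 0)` with
`T_p ~ Beta(p/γ,(1-p)/γ)`, is strictly increasing in `|p - 1/2|`. -/
theorem stmt_13 (γ : ℝ) (hγ : 0 < γ) (px py : ℝ)
    (hx : px ∈ Set.Ioo (0:ℝ) 1) (hy : py ∈ Set.Ioo (0:ℝ) 1)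
    (h : |px - 1/2| > |py - 1/2|) :
    ((betaMeasure (px/γ) ((1-px)/γ)) {t : ℝ | (t - 1/2) * (px - 1/2) > 0}).toReal
      > ((betaMeasure (py/γ) ((1-py)/γ)) {t : ℝ | (t - 1/2) * (py - 1/2) > 0}).toReal := by
  have hxne : px ≠ 1/2 := by
    intro hc
    rw [hc] at h
    simp at h
    exact absurd h (abs_nonneg _).not_gt
  set qx := max px (1-px) with hqx
  set qy := max py (1-py) with hqy
  have habsx : |px - 1/2| = qx - 1/2 := by
    rcases le_total px (1/2) with h' | h'
    · rw [abs_of_nonpos (by linarith), hqx, max_eq_right (by linarith)]; ring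
    · rw [abs_of_nonneg (by linarith), hqx, max_eq_left (by linarith)]
  have habsy : |py - 1/2| = qy - 1/2 := by
    rcases le_total py (1/2) with h' | h'
    · rw [abs_of_nonpos (by linarith), hqy, max_eq_right (by linarith)]; ring
    · rw [abs_of_nonneg (by linarith), hqy, max_eq_left (by linarith)]
  have hqxlt : qx < 1 := by
    rw [hqx]; apply max_lt hx.2; linarith [hx.1]
  have hqylt : qy < 1 := by
    rw [hqy]; apply max_lt hy.2; linarith [hy.1]
  have hqyhalf : 1/2 ≤ qy := by
    rw [hqy]; rcases le_total py (1/2) with h' | h'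
    · exact le_max_of_le_right (by linarith)
    · exact le_max_of_le_left h'
  have hq : qy < qx := by
    have := h; rw [habsx, habsy] at this; linarith
  rw [Beta13.bayes_prob hγ hx hxne, ← hqx]
  have hGx : 0 < Beta13.G (qx / γ) ((1 - qx) / γ) :=
    Beta13.G_pos (div_pos (by linarith [hqyhalf]) hγ) (div_pos (by linarith) hγ)
  by_cases hyne : py = 1/2
  · have hset : {t : ℝ | (t - 1/2) * (py - 1/2) > 0} = ∅ := by
      ext t; simp [hyne]
    rw [hset]
    simpa using hGx
  · rw [Beta13.bayes_prob hγ hy hyne, ← hqy]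
    have hδ : 0 < (qx - qy) / γ := div_pos (by linarith) hγ
    have key := Beta13.G_lt (a := qy / γ) (b := (1 - qy) / γ) (δ := (qx - qy) / γ)
      (div_pos (by linarith [hqyhalf]) hγ) hδ
      ((div_lt_div_iff_of_pos_right hγ).mpr (by linarith))
    have e1 : qy / γ + (qx - qy) / γ = qx / γ := by
      rw [← add_div]; ring_nf
    have e2 : (1 - qy) / γ - (qx - qy) / γ = (1 - qx) / γ := by
      rw [div_sub_div_same]; ring_nf
    rw [e1, e2] at key
    exact key
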